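/- Let m ≥ 3 be an integer and let a₁,…,aₙ be positive integers with gcd(a₁,…,aₙ) = 1 (a primitive m-gonal form). If p is an odd prime dividing m−2, then for every N ∈ ℤ_p the equation a₁P_m(x₁)+⋯+aₙP_m(xₙ) = N has a solution (x₁,…,xₙ) ∈ ℤ_pⁿ; that is, ⟨a₁,…,aₙ⟩_m is universal over ℤ_p. -/

import Mathlib

/-- a primitive `m`-gonal form is universal over `ℤ_p` for any odd prime `p`
dividing `m - 2`.  The `m`-gonal equation is stated multiplied by `2`
(an equivalent formulation, since `2` is a nonzerodivisor in `ℤ_p`). -/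
theorem stmt9 (m : ℤ) (hm : 3 ≤ m) (n : ℕ) (a : Fin n → ℤ) (ha : ∀ i, 0 < a i)
    (hprim : Finset.univ.gcd a = 1)
    (p : ℕ) [Fact p.Prime] (hodd : p ≠ 2) (hdvd : (p : ℤ) ∣ m - 2) :
    ∀ N : ℤ_[p],
      ∃ x : Fin n → ℤ_[p],
        ∑ i, (a i : ℤ_[p]) * (((m : ℤ_[p]) - 2) * ((x i) ^ 2 - x i) + 2 * x i)
          = 2 * N := by
  intro N
  have hp : p.Prime := Fact.out
  -- find an index with `a i` not divisible by `p`
  have hex : ∃ i, ¬ (p : ℤ) ∣ a i := by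
    by_contra h
    push_neg at h
    have hg : (p : ℤ) ∣ Finset.univ.gcd a := Finset.dvd_gcd fun i _ => h i
    rw [hprim] at hg
    have := Int.le_of_dvd one_pos hg
    have := hp.two_le
    omega
  obtain ⟨i, hi⟩ := hex
  set A : ℤ_[p] := (a i : ℤ_[p]) with hAdef
  have hA : ‖A‖ = 1 := by
    have h1 : ‖A‖ ≤ 1 := PadicInt.norm_le_one _
    have h2 : ¬ ‖A‖ < 1 := by
      rw [hAdef, PadicInt.norm_int_lt_one_iff_dvd]; exact hi
    linarith
  have h2norm : ‖(2 : ℤ_[p])‖ = 1 := by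
    have h1 : ‖(2 : ℤ_[p])‖ ≤ 1 := PadicInt.norm_le_one _
    have h2 : ¬ ‖((2 : ℤ) : ℤ_[p])‖ < 1 := by
      rw [PadicInt.norm_int_lt_one_iff_dvd]
      intro h
      have : p ∣ 2 := Int.ofNat_dvd.mp (by exact_mod_cast h)
      exact hodd ((Nat.prime_dvd_prime_iff_eq hp Nat.prime_two).mp this)
    push_cast at h2
    linarith
  set M : ℤ_[p] := (m : ℤ_[p]) - 2 with hMdef
  have hM : ‖M‖ < 1 := by
    have hMe : M = ((m - 2 : ℤ) : ℤ_[p]) := by rw [hMdef]; push_cast; ring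
    rw [hMe, PadicInt.norm_int_lt_one_iff_dvd]
    exact hdvd
  -- `2 * A` is a unit; let a₀ solve the linearized equation
  have hunit : IsUnit (2 * A) := by
    rw [PadicInt.isUnit_iff, norm_mul, hA, h2norm, mul_one]
  set a₀ : ℤ_[p] := ↑hunit.unit⁻¹ * (2 * N) with ha₀def
  have hlin : 2 * A * a₀ = 2 * N := by
    rw [ha₀def, ← mul_assoc, IsUnit.mul_val_inv, one_mul]
  -- the one-variable polynomial
  set F : Polynomial ℤ_[p] :=
    Polynomial.C (A * M) * Polynomial.X ^ 2 + Polynomial.C (A * (2 - M)) * Polynomial.X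
      - Polynomial.C (2 * N) with hF
  have hFeval : ∀ x : ℤ_[p],
      F.eval x = A * M * x ^ 2 + A * (2 - M) * x - 2 * N := by
    intro x; simp [hF]
  have hFderiv : ∀ x : ℤ_[p],
      F.derivative.eval x = A * M * (2 * x) + A * (2 - M) := by
    intro x
    simp [hF, Polynomial.derivative_sub, Polynomial.derivative_add]
    exact Or.inl (Or.inl one_add_one_eq_two)
  have hFa₀ : F.eval a₀ = A * M * (a₀ ^ 2 - a₀) := by
    rw [hFeval]
    have : A * (2 - M) * a₀ = 2 * N - A * M * a₀ := by
      have := hlin; ring_nf; ring_nf at this; linear_combination this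
    rw [this]; ring
  have hnorma : ‖F.eval a₀‖ < 1 := by
    rw [hFa₀]
    calc ‖A * M * (a₀ ^ 2 - a₀)‖ ≤ ‖M‖ := by
          rw [mul_assoc, norm_mul, hA, one_mul, norm_mul]
          calc ‖M‖ * ‖a₀ ^ 2 - a₀‖ ≤ ‖M‖ * 1 :=
                mul_le_mul_of_nonneg_left (PadicInt.norm_le_one _) (norm_nonneg _)
            _ = ‖M‖ := mul_one _
      _ < 1 := hM
  have hnormd : ‖F.derivative.eval a₀‖ = 1 := by
    rw [hFderiv]
    have h1 : ‖A * M * (2 * a₀)‖ < 1 := by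
      calc ‖A * M * (2 * a₀)‖ ≤ ‖M‖ := by
            rw [mul_assoc, norm_mul, hA, one_mul, norm_mul]
            calc ‖M‖ * ‖2 * a₀‖ ≤ ‖M‖ * 1 :=
                  mul_le_mul_of_nonneg_left (PadicInt.norm_le_one _) (norm_nonneg _)
              _ = ‖M‖ := mul_one _
        _ < 1 := hM
    have h2 : ‖A * (2 - M)‖ = 1 := by
      have : A * (2 - M) = 2 * A - A * M := by ring
      rw [this]
      have hAM : ‖A * M‖ < 1 := by
        rw [norm_mul, hA, one_mul]; exact hM
      have h2A : ‖(2 : ℤ_[p]) * A‖ = 1 := by rw [norm_mul, hA, h2norm, mul_one]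
      have hne : ‖(2 : ℤ_[p]) * A‖ ≠ ‖-(A * M)‖ := by
        rw [norm_neg, h2A]; exact fun h => absurd h.symm (ne_of_lt hAM)
      calc ‖2 * A - A * M‖ = ‖2 * A + -(A * M)‖ := by ring_nf
        _ = max ‖(2 : ℤ_[p]) * A‖ ‖-(A * M)‖ := PadicInt.norm_add_eq_max_of_ne hne
        _ = 1 := by rw [norm_neg, h2A]; exact max_eq_left (le_of_lt hAM)
    have hne : ‖A * M * (2 * a₀)‖ ≠ ‖A * (2 - M)‖ := by
      rw [h2]; exact ne_of_lt h1
    rw [PadicInt.norm_add_eq_max_of_ne hne, h2]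
    exact max_eq_right (h2 ▸ le_of_lt (h2 ▸ h1))
  -- Hensel's lemma
  have hhyp : ‖F.eval a₀‖ < ‖F.derivative.eval a₀‖ ^ 2 := by
    rw [hnormd]; simpa using hnorma
  obtain ⟨z, hz, -, -, -⟩ := hensels_lemma hhyp
  refine ⟨fun j => if j = i then z else 0, ?_⟩
  rw [Finset.sum_eq_single_of_mem i (Finset.mem_univ i)]
  · have hzi : (fun j => if j = i then z else 0) i = z := if_pos rfl
    rw [hzi]
    rw [Polynomial.coe_aeval_eq_eval] at hz
    rw [hFeval] at hz
    have h0 : A * M * z ^ 2 + A * (2 - M) * z - 2 * N = 0 := hz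
    rw [← hAdef]
    linear_combination h0
  · intro j _ hj
    simp [if_neg hj]
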